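/- Let n ≥ 2, m ≥ n, and 1 ≤ i < j ≤ n with 1 ≤ m − n ≤ j − i. Then √(I_m^i + I_m^j) = L_{j,n+1−i,2} = ⟨x_0,…,x_{j−1}, y_0,…,y_{n−i}, z_0, z_1⟩; in particular this radical is a prime ideal, so Z_m^i ∩ Z_m^j is irreducible. -/

import Mathlib

noncomputable section

open MvPolynomial

/-- `R N = ℂ[x_0,…,x_N, y_0,…,y_N, z_0,…,z_N]`. -/
abbrev R (N : ℕ) : Type := MvPolynomial (Fin 3 × Fin (N + 1)) ℂ

/-- the variable `x_i` (for `i ≤ N`). -/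
def Xv (N i : ℕ) : R N := if h : i < N + 1 then X (0, ⟨i, h⟩) else 0
/-- the variable `y_i` (for `i ≤ N`). -/
def Yv (N i : ℕ) : R N := if h : i < N + 1 then X (1, ⟨i, h⟩) else 0
/-- the variable `z_i` (for `i ≤ N`). -/
def Zv (N i : ℕ) : R N := if h : i < N + 1 then X (2, ⟨i, h⟩) else 0

/-- `Σ_{i=p}^N x_i t^i`. -/
def xSer (N p : ℕ) : Polynomial (R N) :=
  ∑ i ∈ Finset.Icc p N, Polynomial.C (Xv N i) * Polynomial.X ^ i
/-- `Σ_{i=q}^N y_i t^i`. -/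
def ySer (N q : ℕ) : Polynomial (R N) :=
  ∑ i ∈ Finset.Icc q N, Polynomial.C (Yv N i) * Polynomial.X ^ i
/-- `Σ_{i=r}^N z_i t^i`. -/
def zSer (N r : ℕ) : Polynomial (R N) :=
  ∑ i ∈ Finset.Icc r N, Polynomial.C (Zv N i) * Polynomial.X ^ i

/-- `f_{pqr}^{(j)}`: the coefficient of `t^j` in
`f(Σ_{i=p}^N x_i t^i, Σ_{i=q}^N y_i t^i, Σ_{i=r}^N z_i t^i)` where `f = xy - z^{n+1}`. -/
def fpqr (N n p q r j : ℕ) : R N :=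
  (xSer N p * ySer N q - zSer N r ^ (n + 1)).coeff j


/-- The ideal `L_{pqr} = ⟨x_0,…,x_{p−1}, y_0,…,y_{q−1}, z_0,…,z_{r−1}⟩`. -/
def Lpqr (N p q r : ℕ) : Ideal (R N) :=
  Ideal.span ((Xv N '' Set.Iio p) ∪ (Yv N '' Set.Iio q) ∪ (Zv N '' Set.Iio r))

/-- The substitution `x_i ↦ x_{l+i}`, `y_i ↦ y_{e(n+1)−l+i}`, `z_i ↦ z_{e+i}`. -/
def shiftSub (N n l e : ℕ) : Fin 3 × Fin (N + 1) → R N := fun v =>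
  if v.1 = 0 then Xv N (l + (v.2 : ℕ))
  else if v.1 = 1 then Yv N (e * (n + 1) - l + (v.2 : ℕ))
  else Zv N (e + (v.2 : ℕ))

/-- `g_{l,e}^{(j)}`: obtained from `f^{(j)} = f_{000}^{(j)}` by the substitution
`x_i ↦ x_{l+i}`, `y_i ↦ y_{e(n+1)−l+i}`, `z_i ↦ z_{e+i}`. -/
def gle (N n l e j : ℕ) : R N := aeval (shiftSub N n l e) (fpqr N n 0 0 0 j)

/-- The ideal `⟨f^{(0)},…,f^{(m)}⟩` of `R_m`. -/
def Fideal (m n : ℕ) : Ideal (R m) :=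
  Ideal.span {g | ∃ j ≤ m, g = fpqr m n 0 0 0 j}

/-- `I_m^l = L_{l,n+1−l,1} + ⟨f^{(0)},…,f^{(m)}⟩`. -/
def Iml (m n l : ℕ) : Ideal (R m) := Lpqr m l (n + 1 - l) 1 ⊔ Fideal m n

/-- `G_m^l = ⟨g_{l,1}^{(0)},…,g_{l,1}^{(m−n−1)}⟩` (the zero ideal when `m = n`). -/
def Gml (m n l : ℕ) : Ideal (R m) :=
  Ideal.span {g | ∃ j < m - n, g = gle m n l 1 j}

/-- Points of `ℂ^{3(m+1)}`. -/
abbrev Pt (m : ℕ) := Fin 3 × Fin (m + 1) → ℂ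

/-- The zero locus in `ℂ^{3(m+1)}` of an ideal of `R_m`. -/
def zl (m : ℕ) (I : Ideal (R m)) : Set (Pt m) := {x | ∀ g ∈ I, eval x g = 0}

/-- `Z_m^l ⊆ ℂ^{3(m+1)}`, the zero locus of `I_m^l`. -/
def Zml (m n l : ℕ) : Set (Pt m) := zl m (Iml m n l)

/-- A subset of `ℂ^{3(m+1)}` is irreducible with respect to the Zariski topology,
whose closed sets are exactly the zero loci of ideals of `R_m`. -/
def IsIrredSet (m : ℕ) (S : Set (Pt m)) : Prop :=
  S.Nonempty ∧
    ∀ I₁ I₂ : Ideal (R m), S ⊆ zl m I₁ ∪ zl m I₂ → S ⊆ zl m I₁ ∨ S ⊆ zl m I₂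

/-! ### Coefficients of the series -/

lemma coeff_ser {N : ℕ} (c : ℕ → R N) (hc : ∀ i, N < i → c i = 0) (a : ℕ) :
    (∑ i ∈ Finset.Icc 0 N, Polynomial.C (c i) * Polynomial.X ^ i).coeff a = c a := by
  rw [Polynomial.finset_sum_coeff]
  simp only [Polynomial.coeff_C_mul, Polynomial.coeff_X_pow, mul_ite, mul_one, mul_zero]
  rw [Finset.sum_ite_eq (Finset.Icc 0 N) a c]
  split_ifs with h
  · rfl
  · rw [hc a (by simp at h; omega)]

lemma Xv_eq_zero {N a : ℕ} (h : N < a) : Xv N a = 0 := by rw [Xv, dif_neg (by omega)]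
lemma Yv_eq_zero {N a : ℕ} (h : N < a) : Yv N a = 0 := by rw [Yv, dif_neg (by omega)]
lemma Zv_eq_zero {N a : ℕ} (h : N < a) : Zv N a = 0 := by rw [Zv, dif_neg (by omega)]

lemma coeff_xSer (N a : ℕ) : (xSer N 0).coeff a = Xv N a :=
  coeff_ser (Xv N) (fun _ h => Xv_eq_zero h) a
lemma coeff_ySer (N a : ℕ) : (ySer N 0).coeff a = Yv N a :=
  coeff_ser (Yv N) (fun _ h => Yv_eq_zero h) a
lemma coeff_zSer (N a : ℕ) : (zSer N 0).coeff a = Zv N a :=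
  coeff_ser (Zv N) (fun _ h => Zv_eq_zero h) a

lemma coeff_mul_mem {N : ℕ} (p q : Polynomial (R N)) (K : Ideal (R N)) (k : ℕ)
    (h : ∀ a b, a + b = k → p.coeff a * q.coeff b ∈ K) : (p * q).coeff k ∈ K := by
  rw [Polynomial.coeff_mul]
  exact Ideal.sum_mem _ fun ab hab => h ab.1 ab.2 (Finset.HasAntidiagonal.mem_antidiagonal.mp hab)

lemma coeff_pow_mem {N : ℕ} (p : Polynomial (R N)) (J : Ideal (R N)) (r : ℕ)
    (h : ∀ a, a < r → p.coeff a ∈ J) :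
    ∀ e k, k < e * r → (p ^ e).coeff k ∈ J := by
  intro e
  induction e with
  | zero => intro k hk; omega
  | succ e ih =>
    intro k hk
    rw [Nat.succ_mul] at hk
    rw [pow_succ]
    apply coeff_mul_mem
    intro a b hab
    by_cases h1 : a < e * r
    · exact Ideal.mul_mem_right _ _ (ih a h1)
    · exact Ideal.mul_mem_left _ _ (h b (by omega))

lemma coeff_pow_boundary {N : ℕ} (p : Polynomial (R N)) (J : Ideal (R N)) (r : ℕ)
    (h : ∀ a, a < r → p.coeff a ∈ J) :
    ∀ e, (p ^ e).coeff (e * r) - p.coeff r ^ e ∈ J := by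
  intro e
  induction e with
  | zero => simp
  | succ e ih =>
    classical
    have hmem : (e * r, r) ∈ Finset.HasAntidiagonal.antidiagonal ((e + 1) * r) := by
      rw [Finset.HasAntidiagonal.mem_antidiagonal]; ring
    rw [pow_succ, Polynomial.coeff_mul]
    have key : (∑ ab ∈ Finset.HasAntidiagonal.antidiagonal ((e + 1) * r), (p ^ e).coeff ab.1 * p.coeff ab.2)
        - p.coeff r ^ (e + 1)
        = ∑ ab ∈ Finset.HasAntidiagonal.antidiagonal ((e + 1) * r),
            ((p ^ e).coeff ab.1 * p.coeff ab.2
              - if ab = (e * r, r) then p.coeff r ^ (e + 1) else 0) := by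
      rw [Finset.sum_sub_distrib,
        Finset.sum_ite_eq' (Finset.HasAntidiagonal.antidiagonal ((e + 1) * r)) (e * r, r)
          (fun _ => p.coeff r ^ (e + 1)), if_pos hmem]
    rw [key]
    apply Ideal.sum_mem
    intro ab hab
    have habs := Finset.HasAntidiagonal.mem_antidiagonal.mp hab
    rw [Nat.succ_mul] at habs
    by_cases heq : ab = (e * r, r)
    · subst heq
      rw [if_pos rfl]
      have : (p ^ e).coeff (e * r) * p.coeff r - p.coeff r ^ (e + 1)
          = ((p ^ e).coeff (e * r) - p.coeff r ^ e) * p.coeff r := by ring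
      rw [this]
      exact Ideal.mul_mem_right _ _ ih
    · rw [if_neg heq, sub_zero]
      by_cases h1 : ab.1 < e * r
      · exact Ideal.mul_mem_right _ _ (coeff_pow_mem p J r h e ab.1 h1)
      · refine Ideal.mul_mem_left _ _ (h ab.2 ?_)
        have : ab.1 ≠ e * r ∨ ab.2 ≠ r := by
          by_contra hc; push_neg at hc
          exact heq (Prod.ext hc.1 hc.2)
        omega

/-! ### `Lpqr` as a span of variables -/

def sigmaSet (N p q r : ℕ) : Set (Fin 3 × Fin (N + 1)) :=
  {v | (v.1 = 0 ∧ (v.2 : ℕ) < p) ∨ (v.1 = 1 ∧ (v.2 : ℕ) < q) ∨ (v.1 = 2 ∧ (v.2 : ℕ) < r)}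

lemma Lpqr_eq_span_X (N p q r : ℕ) (hp : p ≤ N + 1) (hq : q ≤ N + 1) (hr : r ≤ N + 1) :
    Lpqr N p q r = Ideal.span (X '' sigmaSet N p q r) := by
  unfold Lpqr
  congr 1
  ext g
  constructor
  · rintro ((⟨a, ha, rfl⟩ | ⟨a, ha, rfl⟩) | ⟨a, ha, rfl⟩)
    · exact ⟨(0, ⟨a, lt_of_lt_of_le ha hp⟩), Or.inl ⟨rfl, ha⟩,
        by rw [Xv, dif_pos (lt_of_lt_of_le ha hp)]⟩
    · exact ⟨(1, ⟨a, lt_of_lt_of_le ha hq⟩), Or.inr (Or.inl ⟨rfl, ha⟩),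
        by rw [Yv, dif_pos (lt_of_lt_of_le ha hq)]⟩
    · exact ⟨(2, ⟨a, lt_of_lt_of_le ha hr⟩), Or.inr (Or.inr ⟨rfl, ha⟩),
        by rw [Zv, dif_pos (lt_of_lt_of_le ha hr)]⟩
  · rintro ⟨⟨v1, v2⟩, hv, rfl⟩
    rcases hv with ⟨h1, h2⟩ | ⟨h1, h2⟩ | ⟨h1, h2⟩ <;> subst h1
    · exact Or.inl (Or.inl ⟨(v2 : ℕ), h2, by rw [Xv, dif_pos v2.isLt, Fin.eta]⟩)
    · exact Or.inl (Or.inr ⟨(v2 : ℕ), h2, by rw [Yv, dif_pos v2.isLt, Fin.eta]⟩)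
    · exact Or.inr ⟨(v2 : ℕ), h2, by rw [Zv, dif_pos v2.isLt, Fin.eta]⟩

lemma Xv_mem_Lpqr {N p q r a : ℕ} (ha : a < p) : Xv N a ∈ Lpqr N p q r :=
  Ideal.subset_span (Or.inl (Or.inl ⟨a, ha, rfl⟩))
lemma Yv_mem_Lpqr {N p q r a : ℕ} (ha : a < q) : Yv N a ∈ Lpqr N p q r :=
  Ideal.subset_span (Or.inl (Or.inr ⟨a, ha, rfl⟩))
lemma Zv_mem_Lpqr {N p q r a : ℕ} (ha : a < r) : Zv N a ∈ Lpqr N p q r :=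
  Ideal.subset_span (Or.inr ⟨a, ha, rfl⟩)


/-! ### Generic machinery: ideals generated by variables -/

open scoped Classical in
/-- The substitution sending the variables in `s` to `0`. -/
def killHom {τ : Type*} (s : Set τ) : MvPolynomial τ ℂ →+* MvPolynomial τ ℂ :=
  (aeval (fun v => if v ∈ s then (0 : MvPolynomial τ ℂ) else X v)).toRingHom

open scoped Classical in
lemma killHom_X {τ : Type*} (s : Set τ) (v : τ) :
    killHom s (X v) = if v ∈ s then 0 else X v := by
  simp [killHom]

open scoped Classical in
lemma killHom_term {τ : Type*} (s : Set τ) (h : MvPolynomial τ ℂ) (e d : τ →₀ ℕ)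
    (hgood : ∀ i ∈ s, d i = 0) :
    coeff d ((algebraMap ℂ (MvPolynomial τ ℂ)) (coeff e h) *
      ∏ i ∈ e.support, (killHom s (X i)) ^ e i) = if e = d then coeff e h else 0 := by
  by_cases hb : ∃ i ∈ s, e i ≠ 0
  · obtain ⟨i, his, hei⟩ := hb
    have : ∏ j ∈ e.support, (killHom s (X j)) ^ e j = 0 := by
      apply Finset.prod_eq_zero (Finsupp.mem_support_iff.mpr hei)
      rw [killHom_X, if_pos his, zero_pow hei]
    have hne : e ≠ d := fun hed => by subst hed; exact hei (hgood i his)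
    rw [this, mul_zero, coeff_zero, if_neg hne]
  · push_neg at hb
    have : ∏ j ∈ e.support, (killHom s (X j)) ^ e j
        = ∏ j ∈ e.support, (X j : MvPolynomial τ ℂ) ^ e j := by
      refine Finset.prod_congr rfl fun j hj => ?_
      rw [killHom_X, if_neg fun hjs => Finsupp.mem_support_iff.mp hj (hb j hjs)]
    have hm := monomial_eq (s := e) (a := coeff e h)
    rw [Finsupp.prod] at hm
    rw [this, algebraMap_eq, ← hm, coeff_monomial]

lemma span_X_eq_ker {τ : Type*} (s : Set τ) :
    Ideal.span (X '' s : Set (MvPolynomial τ ℂ)) = RingHom.ker (killHom s) := by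
  classical
  apply le_antisymm
  · rw [Ideal.span_le]
    rintro _ ⟨v, hv, rfl⟩
    simp [RingHom.mem_ker, killHom_X, hv]
  · intro h hh
    rw [RingHom.mem_ker] at hh
    rw [mem_ideal_span_X_image]
    by_contra hc
    push_neg at hc
    obtain ⟨d, hd, hgood⟩ := hc
    have key : coeff d (killHom s h) = coeff d h := by
      have : killHom s h = ∑ e ∈ h.support,
          (algebraMap ℂ (MvPolynomial τ ℂ)) (coeff e h) *
            ∏ i ∈ e.support, (killHom s (X i)) ^ e i := by
        conv_lhs => rw [killHom, AlgHom.toRingHom_eq_coe, RingHom.coe_coe, aeval_def, eval₂_eq]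
        refine Finset.sum_congr rfl fun e _ => ?_
        congr 1
        refine Finset.prod_congr rfl fun i _ => by rw [killHom_X]
      rw [this, coeff_sum,
        Finset.sum_congr rfl (fun e _ => killHom_term s h e d hgood),
        Finset.sum_ite_eq' h.support d (fun e => coeff e h), if_pos hd]
    rw [hh] at key
    simp only [coeff_zero] at key
    exact (mem_support_iff.mp hd) key.symm

lemma isPrime_span_X {τ : Type*} (s : Set τ) :
    (Ideal.span (X '' s : Set (MvPolynomial τ ℂ))).IsPrime := by
  rw [span_X_eq_ker]; exact RingHom.ker_isPrime _

/-! ### Zero loci of variable ideals -/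

lemma mem_zl_span_X {m : ℕ} (s : Set (Fin 3 × Fin (m + 1))) (x : Pt m) :
    x ∈ zl m (Ideal.span (X '' s)) ↔ ∀ v ∈ s, x v = 0 := by
  constructor
  · intro h v hv
    have := h (X v) (Ideal.subset_span ⟨v, hv, rfl⟩)
    simpa using this
  · intro h g hg
    have hker : Ideal.span (X '' s) ≤ RingHom.ker (eval x) := by
      rw [Ideal.span_le]
      rintro _ ⟨v, hv, rfl⟩
      simp [RingHom.mem_ker, h v hv]
    exact hker hg

lemma mem_span_X_of_vanish {m : ℕ} (s : Set (Fin 3 × Fin (m + 1))) (h : R m)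
    (hv : ∀ x ∈ zl m (Ideal.span (X '' s)), eval x h = 0) :
    h ∈ Ideal.span (X '' s) := by
  classical
  rw [span_X_eq_ker, RingHom.mem_ker]
  have : ∀ q : Pt m, eval q (killHom s h) = 0 := by
    intro q
    set q' : Pt m := fun v => if v ∈ s then 0 else q v with hq'
    have hcomp : (eval q).comp (killHom s) = eval q' := by
      apply MvPolynomial.ringHom_ext
      · intro r; simp [killHom]
      · intro v
        simp only [RingHom.comp_apply, killHom_X, eval_X, hq']
        split_ifs with hvs <;> simp
    have hq'zl : q' ∈ zl m (Ideal.span (X '' s)) :=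
      (mem_zl_span_X s q').mpr fun v hv => by simp [hq', hv]
    calc eval q (killHom s h) = ((eval q).comp (killHom s)) h := rfl
      _ = eval q' h := by rw [hcomp]
      _ = 0 := hv q' hq'zl
  have := MvPolynomial.funext (p := killHom s h) (q := 0) (fun x => by simp [this x])
  exact this

lemma isIrredSet_zl_span_X {m : ℕ} (s : Set (Fin 3 × Fin (m + 1))) :
    IsIrredSet m (zl m (Ideal.span (X '' s))) := by
  constructor
  · exact ⟨fun _ => 0, (mem_zl_span_X s _).mpr fun v _ => rfl⟩
  · intro I₁ I₂ hsub
    by_cases h1 : zl m (Ideal.span (X '' s)) ⊆ zl m I₁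
    · exact Or.inl h1
    · right
      rw [Set.not_subset] at h1
      obtain ⟨p, hp, hpn⟩ := h1
      have : ∃ g₁ ∈ I₁, eval p g₁ ≠ 0 := by
        by_contra hc; push_neg at hc; exact hpn hc
      obtain ⟨g₁, hg₁, hg₁p⟩ := this
      intro q hq g₂ hg₂
      by_contra hg₂q
      have hprod : g₁ * g₂ ∈ Ideal.span (X '' s) := by
        apply mem_span_X_of_vanish
        intro x hx
        rcases hsub hx with hx1 | hx2
        · rw [map_mul, hx1 g₁ hg₁, zero_mul]
        · rw [map_mul, hx2 g₂ hg₂, mul_zero]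
      rcases (isPrime_span_X s).mem_or_mem hprod with hmem | hmem
      · exact hg₁p (hp g₁ hmem)
      · exact hg₂q (hq g₂ hmem)

lemma zl_sup {m : ℕ} (I J : Ideal (R m)) : zl m (I ⊔ J) = zl m I ∩ zl m J := by
  ext x
  constructor
  · intro h
    exact ⟨fun g hg => h g (Ideal.mem_sup_left hg), fun g hg => h g (Ideal.mem_sup_right hg)⟩
  · rintro ⟨h1, h2⟩ g hg
    obtain ⟨a, ha, b, hb, rfl⟩ := Submodule.mem_sup.mp hg
    rw [map_add, h1 a ha, h2 b hb, add_zero]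

lemma zl_radical {m : ℕ} (I : Ideal (R m)) : zl m I.radical = zl m I := by
  ext x
  constructor
  · intro h g hg
    exact h g (Ideal.le_radical hg)
  · intro h g hg
    obtain ⟨k, hk⟩ := Ideal.mem_radical_iff.mp hg
    have hk' := h _ hk
    rw [map_pow] at hk'
    rcases Nat.eq_zero_or_pos k with rfl | hkpos
    · simp at hk'
    · exact pow_eq_zero_iff hkpos.ne' |>.mp hk'

theorem stmt8 (n m : ℕ) (hn : 2 ≤ n) (hm : n ≤ m) (i j : ℕ)
    (hi : 1 ≤ i) (hij : i < j) (hj : j ≤ n)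
    (h1 : 1 ≤ m - n) (h2 : m - n ≤ j - i) :
    (Iml m n i ⊔ Iml m n j).radical = Lpqr m j (n + 1 - i) 2 ∧
    (Lpqr m j (n + 1 - i) 2).IsPrime ∧
    IsIrredSet m (Zml m n i ∩ Zml m n j) := by
  have hLspan : Lpqr m j (n + 1 - i) 2 = Ideal.span (X '' sigmaSet m j (n + 1 - i) 2) :=
    Lpqr_eq_span_X m j (n + 1 - i) 2 (by omega) (by omega) (by omega)
  have hprime : (Lpqr m j (n + 1 - i) 2).IsPrime := by
    rw [hLspan]; exact isPrime_span_X _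
  have hxyK : ∀ (K : Ideal (R m)) (k : ℕ), (∀ a, a < j → Xv m a ∈ K) →
      (∀ b, b < n + 1 - i → Yv m b ∈ K) → k ≤ n + (j - i) →
      (xSer m 0 * ySer m 0).coeff k ∈ K := by
    intro K k hx hy hk
    apply coeff_mul_mem
    intro a b hab
    rw [coeff_xSer, coeff_ySer]
    by_cases ha : a < j
    · exact Ideal.mul_mem_right _ _ (hx a ha)
    · exact Ideal.mul_mem_left _ _ (hy b (by omega))
  have hsupL : Iml m n i ⊔ Iml m n j ≤ Lpqr m j (n + 1 - i) 2 := by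
    have hF : Fideal m n ≤ Lpqr m j (n + 1 - i) 2 := by
      rw [Fideal, Ideal.span_le]
      rintro _ ⟨k, hk, rfl⟩
      rw [fpqr, Polynomial.coeff_sub]
      apply sub_mem
      · exact hxyK _ k (fun a ha => Xv_mem_Lpqr ha) (fun b hb => Yv_mem_Lpqr hb) (by omega)
      · exact coeff_pow_mem (zSer m 0) _ 2
          (fun a ha => by rw [coeff_zSer]; exact Zv_mem_Lpqr ha) (n + 1) k (by omega)
    apply sup_le
    · rw [Iml]
      apply sup_le _ hF
      rw [Lpqr, Lpqr]
      apply Ideal.span_mono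
      exact Set.union_subset_union
        (Set.union_subset_union
          (Set.image_mono (Set.Iio_subset_Iio (by omega))) subset_rfl)
        (Set.image_mono (Set.Iio_subset_Iio (by omega)))
    · rw [Iml]
      apply sup_le _ hF
      rw [Lpqr, Lpqr]
      apply Ideal.span_mono
      exact Set.union_subset_union
        (Set.union_subset_union subset_rfl
          (Set.image_mono (Set.Iio_subset_Iio (by omega))))
        (Set.image_mono (Set.Iio_subset_Iio (by omega)))
  have hXmem : ∀ a, a < j → Xv m a ∈ Iml m n i ⊔ Iml m n j := fun a ha =>
    Ideal.mem_sup_right (Ideal.mem_sup_left (Xv_mem_Lpqr ha))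
  have hYmem : ∀ b, b < n + 1 - i → Yv m b ∈ Iml m n i ⊔ Iml m n j := fun b hb =>
    Ideal.mem_sup_left (Ideal.mem_sup_left (Yv_mem_Lpqr hb))
  have hZ0 : Zv m 0 ∈ Iml m n i ⊔ Iml m n j :=
    Ideal.mem_sup_left (Ideal.mem_sup_left (Zv_mem_Lpqr (by omega)))
  have hFmem : ∀ k, k ≤ m → fpqr m n 0 0 0 k ∈ Iml m n i ⊔ Iml m n j := fun k hk =>
    Ideal.mem_sup_left (Ideal.mem_sup_right (Ideal.subset_span ⟨k, hk, rfl⟩))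
  have hz1 : Zv m 1 ^ (n + 1) ∈ Iml m n i ⊔ Iml m n j := by
    have hb := coeff_pow_boundary (zSer m 0) (Iml m n i ⊔ Iml m n j) 1
      (fun a ha => by
        have ha0 : a = 0 := by omega
        subst ha0; rw [coeff_zSer]; exact hZ0) (n + 1)
    have hxy := hxyK (Iml m n i ⊔ Iml m n j) (n + 1) hXmem hYmem (by omega)
    have hf := hFmem (n + 1) (by omega)
    have e1 : Zv m 1 ^ (n + 1)
        = ((xSer m 0 * ySer m 0).coeff (n + 1) - fpqr m n 0 0 0 (n + 1))
          - ((zSer m 0 ^ (n + 1)).coeff ((n + 1) * 1) - (zSer m 0).coeff 1 ^ (n + 1)) := by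
      rw [fpqr, Polynomial.coeff_sub, coeff_zSer, mul_one]
      ring
    rw [e1]
    exact sub_mem (sub_mem hxy hf) hb
  have hrad : (Iml m n i ⊔ Iml m n j).radical = Lpqr m j (n + 1 - i) 2 := by
    apply le_antisymm
    · have h3 := Ideal.radical_mono hsupL
      rwa [hprime.radical] at h3
    · rw [Lpqr, Ideal.span_le]
      rintro g ((⟨a, ha, rfl⟩ | ⟨b, hb, rfl⟩) | ⟨c, hc, rfl⟩)
      · exact Ideal.le_radical (hXmem a ha)
      · exact Ideal.le_radical (hYmem b hb)
      · have hc2 : c = 0 ∨ c = 1 := by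
          have := Set.mem_Iio.mp hc
          omega
        rcases hc2 with rfl | rfl
        · exact Ideal.le_radical hZ0
        · exact ⟨n + 1, hz1⟩
  refine ⟨hrad, hprime, ?_⟩
  have hZeq : Zml m n i ∩ Zml m n j = zl m (Ideal.span (X '' sigmaSet m j (n + 1 - i) 2)) := by
    rw [Zml, Zml, ← zl_sup, ← zl_radical, hrad, hLspan]
  rw [hZeq]
  exact isIrredSet_zl_span_X _

end
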